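/- For the three orthogonal spin directions e₁, e₂, e₃ and any fourth direction n₄ ∈ ℝ³, the corresponding four eigenbases of the spin-1 operators n_k·L cannot distinguish all pure states on ℂ³: the associated 4×5 matrix M with rows M_k = (2√2 n_{kx}n_{kz}, −2√2 n_{ky}n_{kz}, n_{kx}² − n_{ky}², −2n_{kx}n_{ky}, 3n_{kz}² − 1) has rank at most 3. -/

import Mathlib

open Matrix Complex

noncomputable def Lx : Matrix (Fin 3) (Fin 3) ℂ :=
  ((Real.sqrt 2)⁻¹ : ℝ) • !![0, 1, 0; 1, 0, 1; 0, 1, 0]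
noncomputable def Ly : Matrix (Fin 3) (Fin 3) ℂ :=
  ((Real.sqrt 2)⁻¹ : ℝ) • !![0, -Complex.I, 0; Complex.I, 0, -Complex.I; 0, Complex.I, 0]
noncomputable def Lz : Matrix (Fin 3) (Fin 3) ℂ := !![1, 0, 0; 0, 0, 0; 0, 0, -1]

/-- The spin operator along direction `v`. -/
noncomputable def spinOp (v : Fin 3 → ℝ) : Matrix (Fin 3) (Fin 3) ℂ :=
  (v 0 : ℝ) • Lx + (v 1 : ℝ) • Ly + (v 2 : ℝ) • Lz

/-- The row of the matrix `M` associated to a direction `v`. -/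
noncomputable def Mrow (v : Fin 3 → ℝ) : Fin 5 → ℝ :=
  ![2 * Real.sqrt 2 * v 0 * v 2, -(2 * Real.sqrt 2) * v 1 * v 2,
    v 0 ^ 2 - v 1 ^ 2, -2 * (v 0 * v 1), 3 * v 2 ^ 2 - 1]

/-- For directions `e₁, e₂, e₃` and any fourth direction, the associated `4×5` matrix has rank
at most 3, and consequently the four spin-1 eigenbases cannot distinguish all pure states. -/

lemma spinOp_eq (n : Fin 3 → ℝ) :
    spinOp n = !![(n 2 : ℂ), ((Real.sqrt 2 : ℝ) : ℂ)⁻¹ * ((n 0 : ℂ) - (n 1 : ℂ) * Complex.I), 0;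
      ((Real.sqrt 2 : ℝ) : ℂ)⁻¹ * ((n 0 : ℂ) + (n 1 : ℂ) * Complex.I), 0,
        ((Real.sqrt 2 : ℝ) : ℂ)⁻¹ * ((n 0 : ℂ) - (n 1 : ℂ) * Complex.I);
      0, ((Real.sqrt 2 : ℝ) : ℂ)⁻¹ * ((n 0 : ℂ) + (n 1 : ℂ) * Complex.I), -(n 2 : ℂ)] := by
  ext i j
  fin_cases i <;> fin_cases j <;>
    simp [spinOp, Lx, Ly, Lz, Matrix.smul_apply, Complex.ofReal_inv, Matrix.vecHead, Matrix.vecTail] <;> ring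

lemma sqrt2_sq : (((Real.sqrt 2 : ℝ)) : ℂ) ^ 2 = 2 := by
  norm_cast
  rw [Real.sq_sqrt] ; norm_num

lemma sqrt2_ne : (((Real.sqrt 2 : ℝ)) : ℂ) ≠ 0 := by
  simp [Real.sqrt_eq_zero']

lemma eig_mem (n : Fin 3 → ℝ) (hn : n 0 ^ 2 + n 1 ^ 2 + n 2 ^ 2 = 1)
    (v : Fin 3 → ℂ) (hv : v ≠ 0) (μ : ℂ) (h : spinOp n *ᵥ v = μ • v) :
    μ = 1 ∨ μ = 0 ∨ μ = -1 := by
  have hdet : (spinOp n - μ • (1 : Matrix (Fin 3) (Fin 3) ℂ)).det = 0 := by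
    rw [← Matrix.exists_mulVec_eq_zero_iff]
    exact ⟨v, hv, by rw [Matrix.sub_mulVec, Matrix.smul_mulVec, Matrix.one_mulVec, h, sub_self]⟩
  have hC : ((n 0 : ℂ)) ^ 2 + (n 1 : ℂ) ^ 2 + (n 2 : ℂ) ^ 2 = 1 := by exact_mod_cast hn
  have hcube : μ ^ 3 - μ = 0 := by
    rw [spinOp_eq, Matrix.det_fin_three] at hdet
    norm_num [Matrix.sub_apply, Matrix.smul_apply, Matrix.one_apply, Fin.ext_iff, Matrix.cons_val_two, Matrix.tail_cons, Matrix.head_cons] at hdet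
    field_simp at hdet
    linear_combination (exp := 1) (-1/2 : ℂ)*hdet + μ*hC + (μ*((n 2:ℝ)):ℂ)*0 + (μ*((n 2 : ℂ))^2 - μ^3)/2 * sqrt2_sq - μ*((n 1 : ℂ))^2 * Complex.I_sq
  have : μ * (μ - 1) * (μ + 1) = 0 := by linear_combination hcube
  rcases mul_eq_zero.mp this with h' | h'
  · rcases mul_eq_zero.mp h' with h'' | h''
    · exact Or.inr (Or.inl h'')
    · exact Or.inl (by linear_combination h'')
  · exact Or.inr (Or.inr (by linear_combination h'))

lemma trace_spinOp (n : Fin 3 → ℝ) : (spinOp n).trace = 0 := by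
  rw [spinOp_eq]
  simp [Matrix.trace_fin_three]

lemma trace_spinOp_sq (n : Fin 3 → ℝ) (hn : n 0 ^ 2 + n 1 ^ 2 + n 2 ^ 2 = 1) :
    (spinOp n * spinOp n).trace = 2 := by
  have hC : ((n 0 : ℂ)) ^ 2 + (n 1 : ℂ) ^ 2 + (n 2 : ℂ) ^ 2 = 1 := by exact_mod_cast hn
  rw [spinOp_eq]
  simp only [Matrix.trace_fin_three, Matrix.mul_apply, Fin.sum_univ_three]
  norm_num [Matrix.cons_val_two, Matrix.tail_cons, Matrix.head_cons]
  have hinv : (((Real.sqrt 2:ℝ)):ℂ)⁻¹ * (((Real.sqrt 2:ℝ)):ℂ)⁻¹ = 1/2 := by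
    rw [← mul_inv]
    rw [show (((Real.sqrt 2:ℝ)):ℂ) * (((Real.sqrt 2:ℝ)):ℂ) = 2 by linear_combination sqrt2_sq]
    norm_num
  linear_combination (2:ℂ)*hC + (4*((n 0:ℝ):ℂ)^2 + 4*((n 1:ℝ):ℂ)^2)*hinv - 4*((n 1:ℝ):ℂ)^2 * ((((Real.sqrt 2:ℝ)):ℂ)⁻¹)^2 * Complex.I_sq

noncomputable def Dmat (u : ℂ) : Matrix (Fin 3) (Fin 3) ℂ :=
  !![0, ((Real.sqrt 2 / 2 : ℝ) : ℂ) * u, 0;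
     ((Real.sqrt 2 / 2 : ℝ) : ℂ) * (starRingEnd ℂ) u, 0, -(((Real.sqrt 2 / 2 : ℝ) : ℂ) * u);
     0, -(((Real.sqrt 2 / 2 : ℝ) : ℂ) * (starRingEnd ℂ) u), 0]

lemma trace_Dmat (u : ℂ) : (Dmat u).trace = 0 := by
  simp [Dmat, Matrix.trace_fin_three]

lemma trace_Dmat_spinOp (u : ℂ) (n : Fin 3 → ℝ) : (Dmat u * spinOp n).trace = 0 := by
  rw [spinOp_eq]
  simp [Dmat, Matrix.trace_fin_three, Matrix.mul_apply, Fin.sum_univ_three]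

lemma trace_Dmat_spinOp_sq (u : ℂ) (n : Fin 3 → ℝ)
    (hcond : ((n 0 * n 2 : ℝ) : ℂ) * (u + (starRingEnd ℂ) u)
      + ((n 1 * n 2 : ℝ) : ℂ) * (u - (starRingEnd ℂ) u) * Complex.I = 0) :
    (Dmat u * (spinOp n * spinOp n)).trace = 0 := by
  rw [spinOp_eq]
  set s : ℂ := ((Real.sqrt 2 : ℝ) : ℂ) with hs
  simp [Dmat, Matrix.trace_fin_three, Matrix.mul_apply, Fin.sum_univ_three]
  push_cast at hcond ⊢
  linear_combination (s * s⁻¹) * hcond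

lemma sum_quadform (X : Matrix (Fin 3) (Fin 3) ℂ) (v : Fin 3 → Fin 3 → ℂ)
    (horth : ∀ i j, star (v i) ⬝ᵥ v j = if i = j then (1 : ℂ) else 0) :
    (star (v 0) ⬝ᵥ (X *ᵥ v 0)) + (star (v 1) ⬝ᵥ (X *ᵥ v 1)) + (star (v 2) ⬝ᵥ (X *ᵥ v 2))
      = X.trace := by
  set U : Matrix (Fin 3) (Fin 3) ℂ := Matrix.of (fun i j => v j i) with hU
  have hUU : Uᴴ * U = 1 := by
    ext i j
    have := horth i j
    simpa [Matrix.mul_apply, Matrix.conjTranspose_apply, dotProduct, Matrix.one_apply, hU,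
      mul_comm] using this
  have hU2 : U * Uᴴ = 1 := mul_eq_one_comm.mp hUU
  have : X.trace = (Uᴴ * X * U).trace := by
    calc X.trace = (X * (U * Uᴴ)).trace := by rw [hU2, mul_one]
    _ = (X * U * Uᴴ).trace := by rw [Matrix.mul_assoc]
    _ = (Uᴴ * (X * U)).trace := (Matrix.trace_mul_comm (X * U) Uᴴ)
    _ = (Uᴴ * X * U).trace := by rw [Matrix.mul_assoc]
  rw [this]
  simp only [Matrix.trace_fin_three, Matrix.mul_apply, Fin.sum_univ_three,
    Matrix.conjTranspose_apply, Matrix.of_apply, dotProduct, mulVec, Pi.star_apply, hU]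
  ring

lemma solve3 {a b c t0 t1 t2 : ℂ} (hab : a ≠ b) (hac : a ≠ c) (hbc : b ≠ c)
    (h1 : t0 + t1 + t2 = 0) (h2 : a * t0 + b * t1 + c * t2 = 0)
    (h3 : a ^ 2 * t0 + b ^ 2 * t1 + c ^ 2 * t2 = 0) : t0 = 0 ∧ t1 = 0 ∧ t2 = 0 := by
  have e0 : (a - b) * ((a - c) * t0) = 0 := by linear_combination h3 - (b + c) * h2 + b * c * h1
  have e1 : (b - a) * ((b - c) * t1) = 0 := by linear_combination h3 - (a + c) * h2 + a * c * h1
  have e2 : (c - a) * ((c - b) * t2) = 0 := by linear_combination h3 - (a + b) * h2 + a * b * h1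
  refine ⟨?_, ?_, ?_⟩
  · exact ((mul_eq_zero.mp e0).resolve_left (sub_ne_zero.mpr hab)
      |> mul_eq_zero.mp).resolve_left (sub_ne_zero.mpr hac)
  · exact ((mul_eq_zero.mp e1).resolve_left (sub_ne_zero.mpr (Ne.symm hab))
      |> mul_eq_zero.mp).resolve_left (sub_ne_zero.mpr hbc)
  · exact ((mul_eq_zero.mp e2).resolve_left (sub_ne_zero.mpr (Ne.symm hac))
      |> mul_eq_zero.mp).resolve_left (sub_ne_zero.mpr (Ne.symm hbc))

lemma trace_vmv (a b c d : Fin 3 → ℂ) :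
    (Matrix.vecMulVec a b * Matrix.vecMulVec c d).trace = (b ⬝ᵥ c) * (d ⬝ᵥ a) := by
  simp only [Matrix.trace_fin_three, Matrix.mul_apply, Fin.sum_univ_three,
    Matrix.vecMulVec_apply, dotProduct]
  ring

noncomputable def psiV (u : ℂ) : Fin 3 → ℂ :=
  ![u / 2, ((Real.sqrt 2 / 2 : ℝ) : ℂ), -((starRingEnd ℂ) u) / 2]
noncomputable def etaV (u : ℂ) : Fin 3 → ℂ :=
  ![u / 2, -((Real.sqrt 2 / 2 : ℝ) : ℂ), -((starRingEnd ℂ) u) / 2]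

lemma half_sq : ((Real.sqrt 2 / 2 : ℝ) : ℂ) ^ 2 = 1 / 2 := by
  have : ((Real.sqrt 2 / 2 : ℝ) : ℂ) = ((Real.sqrt 2 : ℝ) : ℂ) / 2 := by push_cast; ring
  rw [this, div_pow, sqrt2_sq]
  norm_num

lemma psiV_norm (u : ℂ) (hu : u * (starRingEnd ℂ) u = 1) : star (psiV u) ⬝ᵥ psiV u = 1 := by
  simp only [psiV, dotProduct, Fin.sum_univ_three, Pi.star_apply, Matrix.cons_val_zero,
    Matrix.cons_val_one, Matrix.head_cons, Matrix.cons_val_two, Matrix.tail_cons,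
    RCLike.star_def, map_div₀, map_neg, Complex.conj_conj, Complex.conj_ofReal, map_ofNat]
  linear_combination hu / 2 + half_sq
lemma etaV_norm (u : ℂ) (hu : u * (starRingEnd ℂ) u = 1) : star (etaV u) ⬝ᵥ etaV u = 1 := by
  simp only [etaV, dotProduct, Fin.sum_univ_three, Pi.star_apply, Matrix.cons_val_zero,
    Matrix.cons_val_one, Matrix.head_cons, Matrix.cons_val_two, Matrix.tail_cons,
    RCLike.star_def, map_div₀, map_neg, Complex.conj_conj, Complex.conj_ofReal, map_ofNat]
  linear_combination hu / 2 + half_sq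

lemma bridge (u : ℂ) (v : Fin 3 → ℂ) :
    (star v ⬝ᵥ psiV u) * (star (psiV u) ⬝ᵥ v) - (star v ⬝ᵥ etaV u) * (star (etaV u) ⬝ᵥ v)
      = star v ⬝ᵥ (Dmat u *ᵥ v) := by
  simp only [psiV, etaV, Dmat, dotProduct, Fin.sum_univ_three, Pi.star_apply, mulVec,
    Matrix.cons_val_zero, Matrix.cons_val_one, Matrix.head_cons, Matrix.cons_val_two,
    Matrix.tail_cons, RCLike.star_def, map_div₀, map_neg, Complex.conj_conj,
    Complex.conj_ofReal, map_ofNat, Matrix.cons_val', Matrix.empty_val', Matrix.cons_val_fin_one,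
    Matrix.head_fin_const, Matrix.of_apply, Matrix.cons_dotProduct, Matrix.dotProduct_of_isEmpty]
  ring

theorem three_axes_plus_one_insufficient (n₄ : Fin 3 → ℝ)
    (hn₄ : n₄ 0 ^ 2 + n₄ 1 ^ 2 + n₄ 2 ^ 2 = 1) :
    letI nvec : Fin 4 → Fin 3 → ℝ := ![![1, 0, 0], ![0, 1, 0], ![0, 0, 1], n₄]
    letI M : Matrix (Fin 4) (Fin 5) ℝ := fun k => Mrow (nvec k)
    M.rank ≤ 3 ∧
    ∀ B : Fin 4 → Fin 3 → Fin 3 → ℂ,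
      (∀ k i j, star (B k i) ⬝ᵥ B k j = if i = j then (1 : ℂ) else 0) →
      (∀ k j, ∃ μ : ℂ, spinOp (nvec k) *ᵥ B k j = μ • B k j) →
      ∃ ψ η : Fin 3 → ℂ, star ψ ⬝ᵥ ψ = 1 ∧ star η ⬝ᵥ η = 1 ∧
        Matrix.vecMulVec ψ (star ψ) ≠ Matrix.vecMulVec η (star η) ∧
        ∀ k j, (Matrix.vecMulVec (B k j) (star (B k j)) *
            Matrix.vecMulVec ψ (star ψ)).trace =
          (Matrix.vecMulVec (B k j) (star (B k j)) * Matrix.vecMulVec η (star η)).trace := by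
  set nvec : Fin 4 → Fin 3 → ℝ := ![![1, 0, 0], ![0, 1, 0], ![0, 0, 1], n₄] with hnvec
  constructor
  · -- rank part
    have hM : (fun k => Mrow (nvec k)) = (!![(1:ℝ),0,0;0,1,0;-1,-1,0;0,0,1] : Matrix (Fin 4) (Fin 3) ℝ) *
        (Matrix.of ![Mrow ![1,0,0], Mrow ![0,1,0], Mrow n₄] : Matrix (Fin 3) (Fin 5) ℝ) := by
      ext k j
      fin_cases k <;> fin_cases j <;>
        simp [hnvec, Mrow, Matrix.mul_apply, Fin.sum_univ_three] <;> ring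
    show Matrix.rank (fun k => Mrow (nvec k)) ≤ 3
    rw [hM]
    refine le_trans (Matrix.rank_mul_le_right _ _) (le_trans (Matrix.rank_le_card_height _) ?_)
    simp
  · intro B horth heig
    -- construct the phase u
    set c : ℝ := n₄ 1 * n₄ 2 with hc
    set d : ℝ := n₄ 0 * n₄ 2 with hd
    set w : ℂ := (c : ℂ) + (d : ℂ) * Complex.I with hw
    have hwre : w.re = c := by simp [hw]
    have hwim : w.im = d := by simp [hw]
    obtain ⟨u, hu, hcond⟩ : ∃ u : ℂ, u * (starRingEnd ℂ) u = 1 ∧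
        ((d : ℂ) * (u + (starRingEnd ℂ) u) + (c : ℂ) * (u - (starRingEnd ℂ) u) * Complex.I = 0) := by
      by_cases hw0 : w = 0
      · refine ⟨1, by norm_num, ?_⟩
        have hc0 : c = 0 := by rw [← hwre, hw0]; simp
        have hd0 : d = 0 := by rw [← hwim, hw0]; simp
        rw [hc0, hd0]
        norm_num
      · have habs : (‖w‖ : ℝ) ≠ 0 := by
          simpa using (norm_ne_zero_iff.mpr hw0)
        have habsC : ((‖w‖ : ℝ) : ℂ) ≠ 0 := by exact_mod_cast habs
        refine ⟨w / ((‖w‖ : ℝ) : ℂ), ?_, ?_⟩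
        · rw [map_div₀]
          rw [Complex.conj_ofReal]
          field_simp
          rw [Complex.mul_conj]
          rw [← Complex.sq_norm]
          push_cast
          ring
        · have hcw : (starRingEnd ℂ) w = (c : ℂ) - (d : ℂ) * Complex.I := by
            rw [hw]; simp [Complex.conj_ofReal, Complex.conj_I]; ring
          rw [map_div₀, Complex.conj_ofReal, hcw, hw]
          field_simp
          linear_combination (2 * (c:ℂ) * (d:ℂ) * ((‖(c:ℂ) + (d:ℂ) * Complex.I‖ : ℝ) : ℂ)⁻¹) * Complex.I_sq
    -- unit norm of each direction
    have hunit : ∀ k : Fin 4, nvec k 0 ^ 2 + nvec k 1 ^ 2 + nvec k 2 ^ 2 = 1 := by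
      intro k
      fin_cases k <;> simp [nvec] <;> norm_num [hn₄]
    -- the trace condition for each direction
    have hcondk : ∀ k : Fin 4,
        ((nvec k 0 * nvec k 2 : ℝ) : ℂ) * (u + (starRingEnd ℂ) u)
          + ((nvec k 1 * nvec k 2 : ℝ) : ℂ) * (u - (starRingEnd ℂ) u) * Complex.I = 0 := by
      intro k
      fin_cases k
      · simp [nvec]
      · simp [nvec]
      · simp [nvec]
      · simpa [nvec, ← hc, ← hd] using hcond
    have hune : u ≠ 0 := by
      intro h0
      rw [h0] at hu
      simp at hu
    refine ⟨psiV u, etaV u, psiV_norm u hu, etaV_norm u hu, ?_, ?_⟩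
    · -- projectors differ
      intro h
      have h01 := congrFun (congrFun h 0) 1
      simp only [Matrix.vecMulVec_apply, psiV, etaV, Pi.star_apply, Matrix.cons_val_zero,
        Matrix.cons_val_one, Matrix.head_cons, RCLike.star_def, Complex.conj_ofReal, map_neg] at h01
      have hs0 : ((Real.sqrt 2 / 2 : ℝ) : ℂ) ≠ 0 := by
        have : (Real.sqrt 2 / 2 : ℝ) ≠ 0 := by positivity
        exact_mod_cast this
      have hzero : u * ((Real.sqrt 2 / 2 : ℝ) : ℂ) = 0 := by linear_combination h01
      rcases mul_eq_zero.mp hzero with h' | h'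
      · exact hune h'
      · exact hs0 h'
    · -- main trace equalities
      intro k j
      -- eigenvalues
      have hμex := heig k
      set μ : Fin 3 → ℂ := fun j => (hμex j).choose with hμdef
      have hμ : ∀ j, spinOp (nvec k) *ᵥ B k j = μ j • B k j := fun j => (hμex j).choose_spec
      set S : Matrix (Fin 3) (Fin 3) ℂ := spinOp (nvec k) with hS
      set t : Fin 3 → ℂ := fun j => star (B k j) ⬝ᵥ (Dmat u *ᵥ B k j) with ht
      have hvnorm : ∀ i, star (B k i) ⬝ᵥ B k i = 1 := by
        intro i; simpa using horth k i i
      have hvne : ∀ i, B k i ≠ 0 := by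
        intro i h0
        have := hvnorm i
        rw [h0] at this
        simp at this
      -- sums
      have F1 : t 0 + t 1 + t 2 = 0 := by
        rw [ht]
        simp only []
        rw [sum_quadform (Dmat u) (B k) (horth k)]
        exact trace_Dmat u
      have F2 : μ 0 * t 0 + μ 1 * t 1 + μ 2 * t 2 = 0 := by
        have hterm : ∀ i, star (B k i) ⬝ᵥ ((Dmat u * S) *ᵥ B k i) = μ i * t i := by
          intro i
          rw [← Matrix.mulVec_mulVec, hμ i, Matrix.mulVec_smul, dotProduct_smul]
          rfl
        have := sum_quadform (Dmat u * S) (B k) (horth k)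
        rw [hterm 0, hterm 1, hterm 2] at this
        rw [this, hS]
        exact trace_Dmat_spinOp u (nvec k)
      have F3 : μ 0 ^ 2 * t 0 + μ 1 ^ 2 * t 1 + μ 2 ^ 2 * t 2 = 0 := by
        have hterm : ∀ i, star (B k i) ⬝ᵥ ((Dmat u * (S * S)) *ᵥ B k i) = μ i ^ 2 * t i := by
          intro i
          rw [← Matrix.mulVec_mulVec, ← Matrix.mulVec_mulVec, hμ i, Matrix.mulVec_smul, hμ i,
            smul_smul, Matrix.mulVec_smul, dotProduct_smul]
          rw [pow_two]
          rfl
        have := sum_quadform (Dmat u * (S * S)) (B k) (horth k)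
        rw [hterm 0, hterm 1, hterm 2] at this
        rw [this, hS]
        exact trace_Dmat_spinOp_sq u (nvec k) (hcondk k)
      have G1 : μ 0 + μ 1 + μ 2 = 0 := by
        have hterm : ∀ i, star (B k i) ⬝ᵥ (S *ᵥ B k i) = μ i := by
          intro i
          rw [hμ i, dotProduct_smul, hvnorm i]
          simp
        have := sum_quadform S (B k) (horth k)
        rw [hterm 0, hterm 1, hterm 2] at this
        rw [this, hS, trace_spinOp]
      have G2 : μ 0 ^ 2 + μ 1 ^ 2 + μ 2 ^ 2 = 2 := by
        have hterm : ∀ i, star (B k i) ⬝ᵥ ((S * S) *ᵥ B k i) = μ i ^ 2 := by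
          intro i
          rw [← Matrix.mulVec_mulVec, hμ i, Matrix.mulVec_smul, hμ i, smul_smul,
            dotProduct_smul, hvnorm i]
          rw [pow_two]; simp
        have := sum_quadform (S * S) (B k) (horth k)
        rw [hterm 0, hterm 1, hterm 2] at this
        rw [this, hS, trace_spinOp_sq (nvec k) (hunit k)]
      have E : ∀ i, μ i = 1 ∨ μ i = 0 ∨ μ i = -1 := by
        intro i
        exact eig_mem (nvec k) (hunit k) (B k i) (hvne i) (μ i) (hμ i)
      have hT : t 0 = 0 ∧ t 1 = 0 ∧ t 2 = 0 := by
        rcases E 0 with h0 | h0 | h0 <;> rcases E 1 with h1 | h1 | h1 <;>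
          rcases E 2 with h2 | h2 | h2 <;>
          rw [h0, h1, h2] at G1 G2 F2 F3 <;>
          first
          | (refine solve3 ?_ ?_ ?_ F1 F2 F3 <;> (norm_num; done))
          | (norm_num at G1; done)
          | (norm_num at G2; done)
      -- finish
      rw [trace_vmv, trace_vmv]
      have hb := bridge u (B k j)
      have htj : t j = 0 := by
        fin_cases j
        · exact hT.1
        · exact hT.2.1
        · exact hT.2.2
      rw [ht] at htj
      have : (star (B k j) ⬝ᵥ psiV u) * (star (psiV u) ⬝ᵥ B k j)
          - (star (B k j) ⬝ᵥ etaV u) * (star (etaV u) ⬝ᵥ B k j) = 0 := by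
        rw [hb]
        exact htj
      exact sub_eq_zero.mp this
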